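/- In the NE-HPE framework with w (m,M)-regular, define Λ_k = Σ_{i=1}^k λ_i and the ergodic residual r^a_k = (1/Λ_k) Σ_{i=1}^k λ_i r_i. Then for every k ≥ 1: ‖r^a_k‖* ≤ (2√2 M / (√m Λ_k)) · ((dw)_0 + η_0)^{1/2}, where (dw)_0 = inf{(dw)_{z_0}(z*) : z* ∈ T^{-1}(0)}. -/

import Mathlib

/-- The dual (extended) seminorm of a seminorm `p` on a real inner product space. -/
noncomputable def dualSN {Z : Type*} [NormedAddCommGroup Z] [InnerProductSpace ℝ Z]
    (p : Seminorm ℝ Z) (u : Z) : EReal :=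
  ⨆ v : {v : Z // p v ≤ 1}, ((inner ℝ u v.1 : ℝ) : EReal)

/-- A set-valued operator `T` is monotone. -/
def IsMonotoneOp {Z : Type*} [NormedAddCommGroup Z] [InnerProductSpace ℝ Z]
    (T : Z → Set Z) : Prop :=
  ∀ u₁ v₁ u₂ v₂ : Z, u₂ ∈ T u₁ → v₂ ∈ T v₁ → 0 ≤ (inner ℝ (u₂ - v₂) (u₁ - v₁) : ℝ)

/-- A monotone operator is maximal. -/
def IsMaximalMonotoneOp {Z : Type*} [NormedAddCommGroup Z] [InnerProductSpace ℝ Z]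
    (T : Z → Set Z) : Prop :=
  IsMonotoneOp T ∧
    ∀ u v : Z, (∀ u₁ u₂ : Z, u₂ ∈ T u₁ → 0 ≤ (inner ℝ (v - u₂) (u - u₁) : ℝ)) → v ∈ T u

/-- The `ε`-enlargement `T^{[ε]}` of a monotone operator `T`. -/
def epsEnlargement {Z : Type*} [NormedAddCommGroup Z] [InnerProductSpace ℝ Z]
    (T : Z → Set Z) (ε : ℝ) (v : Z) : Set Z :=
  {v' : Z | ∀ v₁ v₂ : Z, v₂ ∈ T v₁ → -ε ≤ (inner ℝ (v' - v₂) (v - v₁) : ℝ)}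

/-- Ergodic residual bound for the NE-HPE framework with `w` `(m,M)`-regular: with
`Λ_k = Σ_{i=1}^k λ_i` and `r^a_k = (1/Λ_k) Σ_{i=1}^k λ_i r_i`, for every `k ≥ 1`
`‖r^a_k‖* ≤ (2√2 M/(√m Λ_k))·((dw)_0 + η_0)^{1/2}`, where
`(dw)_0 = inf {(dw)_{z_0}(z*) : z* ∈ T⁻¹(0)}`. -/
theorem nehpe_ergodic_residual {Z : Type*} [NormedAddCommGroup Z] [InnerProductSpace ℝ Z]
    [FiniteDimensional ℝ Z]
    (Zs : Set Z) (hZs : Convex ℝ Zs) (hZsclosed : IsClosed Zs) (p : Seminorm ℝ Z)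
    (w : Z → ℝ) (g : Z → Z) (m M : ℝ) (hm : 0 < m) (hM : 0 < M)
    (dw : Z → Z → ℝ)
    (hdw : ∀ z z' : Z, dw z z' = w z' - w z - (inner ℝ (g z) (z' - z) : ℝ))
    (hstrong : ∀ z ∈ Zs, ∀ z' ∈ Zs, m / 2 * (p (z - z'))^2 ≤ dw z z')
    (hlip : ∀ z ∈ Zs, ∀ z' ∈ Zs, dualSN p (g z - g z') ≤ ((M * p (z - z') : ℝ) : EReal))
    (T : Z → Set Z) (hT : IsMaximalMonotoneOp T)
    (hdom : ∀ v : Z, (T v).Nonempty → v ∈ Zs)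
    (hT0 : ∃ zs : Z, 0 ∈ T zs)
    (z ztil : ℕ → Z) (hzZ : ∀ k, z k ∈ Zs) (hztilZ : ∀ k, ztil k ∈ Zs)
    (lam eps eta : ℕ → ℝ) (r : ℕ → Z) (σ : ℝ)
    (hσ : σ ∈ Set.Icc (0 : ℝ) 1)
    (hlam : ∀ k, 1 ≤ k → 0 < lam k)
    (heps : ∀ k, 1 ≤ k → 0 ≤ eps k)
    (heta : ∀ k, 0 ≤ eta k)
    (hr : ∀ k, 1 ≤ k → r k = (1 / lam k) • (g (z (k - 1)) - g (z k)))
    (hincl : ∀ k, 1 ≤ k → r k ∈ epsEnlargement T (eps k) (ztil k))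
    (herr : ∀ k, 1 ≤ k →
      dw (z k) (ztil k) + lam k * eps k + eta k ≤ σ * dw (z (k - 1)) (ztil k) + eta (k - 1))
    (dw0 : ℝ) (hdw0 : dw0 = sInf ((fun zs => dw (z 0) zs) '' {zs : Z | 0 ∈ T zs}))
    (k : ℕ) (hk : 1 ≤ k) :
    dualSN p ((1 / ∑ i ∈ Finset.Icc 1 k, lam i) • ∑ i ∈ Finset.Icc 1 k, lam i • r i)
      ≤ ((2 * Real.sqrt 2 * M / (Real.sqrt m * ∑ i ∈ Finset.Icc 1 k, lam i) *
          Real.sqrt (dw0 + eta 0) : ℝ) : EReal) := by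

  classical
  -- abbreviations
  set Lam : ℝ := ∑ i ∈ Finset.Icc 1 k, lam i with hLam
  have hLampos : 0 < Lam := by
    refine Finset.sum_pos (fun i hi => hlam i (Finset.mem_Icc.mp hi).1) ?_
    exact ⟨1, Finset.mem_Icc.mpr ⟨le_refl 1, hk⟩⟩
  clear_value Lam
  -- dw is nonnegative on Zs
  have hdwnn : ∀ a ∈ Zs, ∀ b ∈ Zs, 0 ≤ dw a b := by
    intro a ha b hb
    have := hstrong a ha b hb
    nlinarith [apply_nonneg p (a - b), sq_nonneg (p (a - b))]
  -- Bregman three-point identity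
  have hbreg : ∀ a b c : Z, dw a c = dw a b + dw b c + (inner ℝ (g a - g b) (b - c) : ℝ) := by
    intro a b c
    simp only [hdw, inner_sub_left, inner_sub_right]
    ring
  -- telescoping sum
  have htel : ∀ n, 1 ≤ n → (∑ i ∈ Finset.Icc 1 n, lam i • r i) = g (z 0) - g (z n) := by
    intro n hn
    induction n, hn using Nat.le_induction with
    | base =>
      rw [Finset.Icc_self, Finset.sum_singleton, hr 1 le_rfl, smul_smul,
        mul_one_div_cancel (ne_of_gt (hlam 1 le_rfl)), one_smul]
    | succ n hn ih =>
      rw [Finset.sum_Icc_succ_top (by omega : 1 ≤ n + 1), ih, hr (n + 1) (by omega), smul_smul,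
        mul_one_div_cancel (ne_of_gt (hlam (n + 1) (by omega))), one_smul]
      simp only [Nat.add_sub_cancel]
      abel
  -- the zero-point set is nonempty
  obtain ⟨zs0, hzs0⟩ := hT0
  have hSne : ((fun zs => dw (z 0) zs) '' {zs : Z | 0 ∈ T zs}).Nonempty :=
    ⟨dw (z 0) zs0, ⟨zs0, hzs0, rfl⟩⟩
  have hdw0nn : 0 ≤ dw0 := by
    rw [hdw0]
    apply Real.sInf_nonneg
    rintro x ⟨zs, hzs, rfl⟩
    exact hdwnn (z 0) (hzZ 0) zs (hdom zs ⟨0, hzs⟩)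
  have hD0 : 0 ≤ dw0 + eta 0 := add_nonneg hdw0nn (heta 0)
  -- key descent step for any zero point
  have hstep : ∀ zstar : Z, 0 ∈ T zstar → ∀ i, 1 ≤ i →
      dw (z i) zstar + eta i ≤ dw (z (i - 1)) zstar + eta (i - 1) := by
    intro zstar hzstar i hi
    have hzsZ : zstar ∈ Zs := hdom zstar ⟨0, hzstar⟩
    have h1 : dw (z (i-1)) zstar = dw (z (i-1)) (z i) + dw (z i) zstar
        + (inner ℝ (g (z (i-1)) - g (z i)) (z i - zstar) : ℝ) := hbreg _ _ _
    have h2 : dw (z (i-1)) (ztil i) = dw (z (i-1)) (z i) + dw (z i) (ztil i)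
        + (inner ℝ (g (z (i-1)) - g (z i)) (z i - ztil i) : ℝ) := hbreg _ _ _
    have hlami := hlam i hi
    have hri : g (z (i-1)) - g (z i) = lam i • r i := by
      rw [hr i hi, smul_smul, mul_one_div_cancel (ne_of_gt hlami), one_smul]
    have hmono : -(eps i) ≤ (inner ℝ (r i - 0) (ztil i - zstar) : ℝ) :=
      hincl i hi zstar 0 hzstar
    have hmono' : -(eps i) ≤ (inner ℝ (r i) (ztil i - zstar) : ℝ) := by
      rwa [sub_zero] at hmono
    have hsplit : (inner ℝ (g (z (i-1)) - g (z i)) (z i - zstar) : ℝ)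
        = (inner ℝ (g (z (i-1)) - g (z i)) (z i - ztil i) : ℝ)
          + lam i * (inner ℝ (r i) (ztil i - zstar) : ℝ) := by
      rw [hri]; simp only [real_inner_smul_left]
      rw [show (z i - zstar) = (z i - ztil i) + (ztil i - zstar) by abel, inner_add_right]
      ring
    have herri := herr i hi
    have hdwat : 0 ≤ dw (z (i-1)) (ztil i) := hdwnn _ (hzZ _) _ (hztilZ _)
    have hσ1 : σ ≤ 1 := hσ.2
    nlinarith [mul_le_of_le_one_left hdwat hσ1, mul_le_mul_of_nonneg_left hmono' (le_of_lt hlami)]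
  -- telescoped descent
  have hchain : ∀ zstar : Z, 0 ∈ T zstar → ∀ n,
      dw (z n) zstar + eta n ≤ dw (z 0) zstar + eta 0 := by
    intro zstar hzstar n
    induction n with
    | zero => exact le_rfl
    | succ n ih =>
      have := hstep zstar hzstar (n + 1) (by omega)
      simp only [Nat.add_sub_cancel] at this
      linarith
  -- main seminorm bound
  have hsq : (p (z 0 - z k))^2 ≤ 8 / m * (dw0 + eta 0) := by
    refine le_of_forall_pos_le_add (fun ε hε => ?_)
    have hδ : 0 < ε * m / 8 := by positivity
    obtain ⟨x, ⟨zstar, hzstar, rfl⟩, hx⟩ := Real.lt_sInf_add_pos hSne hδ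
    rw [← hdw0] at hx
    have hzsZ : zstar ∈ Zs := hdom zstar ⟨0, hzstar⟩
    have hd1 : 0 ≤ dw (z 0) zstar := hdwnn _ (hzZ 0) _ hzsZ
    have hd2 : 0 ≤ dw (z k) zstar := hdwnn _ (hzZ k) _ hzsZ
    have hdk : dw (z k) zstar ≤ dw (z 0) zstar + eta 0 := by
      have := hchain zstar hzstar k
      have := heta k
      linarith
    set D : ℝ := dw (z 0) zstar + eta 0 with hD
    have hDnn : 0 ≤ D := by have := heta 0; simp only [hD]; linarith
    have hp1 : p (z 0 - zstar) ≤ Real.sqrt (2 / m * D) := by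
      rw [show p (z 0 - zstar) = Real.sqrt ((p (z 0 - zstar))^2) from
        (Real.sqrt_sq (apply_nonneg p _)).symm]
      apply Real.sqrt_le_sqrt
      have := hstrong (z 0) (hzZ 0) zstar hzsZ
      have h0 : dw (z 0) zstar ≤ D := by simp only [hD]; have := heta 0; linarith
      rw [div_mul_eq_mul_div, le_div_iff₀ hm]
      nlinarith
    have hp2 : p (z k - zstar) ≤ Real.sqrt (2 / m * D) := by
      rw [show p (z k - zstar) = Real.sqrt ((p (z k - zstar))^2) from
        (Real.sqrt_sq (apply_nonneg p _)).symm]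
      apply Real.sqrt_le_sqrt
      have := hstrong (z k) (hzZ k) zstar hzsZ
      rw [div_mul_eq_mul_div, le_div_iff₀ hm]
      nlinarith
    have htri : p (z 0 - z k) ≤ p (z 0 - zstar) + p (z k - zstar) := by
      have : z 0 - z k = (z 0 - zstar) + -(z k - zstar) := by abel
      calc p (z 0 - z k) = p ((z 0 - zstar) + -(z k - zstar)) := by rw [← this]
        _ ≤ p (z 0 - zstar) + p (-(z k - zstar)) := map_add_le_add p _ _
        _ = p (z 0 - zstar) + p (z k - zstar) := by rw [map_neg_eq_map]
    have hpk : p (z 0 - z k) ≤ 2 * Real.sqrt (2 / m * D) := by linarith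
    have hsqrt : (Real.sqrt (2 / m * D))^2 = 2 / m * D :=
      Real.sq_sqrt (by positivity)
    have hDlt : D ≤ dw0 + eta 0 + ε * m / 8 := by
      simp only [hD]; linarith
    have hpk2 : (p (z 0 - z k))^2 ≤ 4 * (2 / m * D) := by
      nlinarith [apply_nonneg p (z 0 - z k), Real.sqrt_nonneg (2 / m * D)]
    have h8 : 4 * (2 / m * D) ≤ 8 / m * (dw0 + eta 0) + ε := by
      have h1 : 4 * (2 / m * D) = 8 / m * D := by ring
      rw [h1]
      have h2 : 8 / m * D ≤ 8 / m * (dw0 + eta 0 + ε * m / 8) :=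
        mul_le_mul_of_nonneg_left hDlt (by positivity)
      have h3 : 8 / m * (dw0 + eta 0 + ε * m / 8) = 8 / m * (dw0 + eta 0) + ε := by
        field_simp
      linarith
    linarith
  have hp : p (z 0 - z k) ≤ 2 * Real.sqrt 2 / Real.sqrt m * Real.sqrt (dw0 + eta 0) := by
    have h1 : p (z 0 - z k) ≤ Real.sqrt (8 / m * (dw0 + eta 0)) := by
      rw [show p (z 0 - z k) = Real.sqrt ((p (z 0 - z k))^2) from
        (Real.sqrt_sq (apply_nonneg p _)).symm]
      exact Real.sqrt_le_sqrt hsq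
    have h2 : Real.sqrt (8 / m * (dw0 + eta 0))
        = 2 * Real.sqrt 2 / Real.sqrt m * Real.sqrt (dw0 + eta 0) := by
      rw [Real.sqrt_mul (by positivity)]
      congr 1
      rw [show (8 : ℝ) / m = (2 * Real.sqrt 2 / Real.sqrt m)^2 by
        have h2 : (Real.sqrt 2)^2 = 2 := Real.sq_sqrt (by norm_num)
        have hmm : (Real.sqrt m)^2 = m := Real.sq_sqrt hm.le
        have hmne : Real.sqrt m ≠ 0 := by positivity
        field_simp
        nlinarith]
      exact Real.sqrt_sq (by positivity)
    rwa [h2] at h1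
  -- conclude via dualSN
  rw [htel k hk]
  unfold dualSN
  refine iSup_le ?_
  rintro ⟨v, hv⟩
  have hvineq : (inner ℝ (g (z 0) - g (z k)) v : ℝ) ≤ M * p (z 0 - z k) := by
    have hle : ((inner ℝ (g (z 0) - g (z k)) v : ℝ) : EReal)
        ≤ ((M * p (z 0 - z k) : ℝ) : EReal) := by
      refine le_trans ?_ (hlip (z 0) (hzZ 0) (z k) (hzZ k))
      exact le_iSup (fun v : {v : Z // p v ≤ 1} =>
        ((inner ℝ (g (z 0) - g (z k)) v.1 : ℝ) : EReal)) ⟨v, hv⟩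
    exact_mod_cast hle
  have hfinal : (inner ℝ ((1 / Lam) • (g (z 0) - g (z k))) v : ℝ)
      ≤ 2 * Real.sqrt 2 * M / (Real.sqrt m * Lam) * Real.sqrt (dw0 + eta 0) := by
    rw [real_inner_smul_left]
    have hLinv : 0 < 1 / Lam := by positivity
    have step1 : 1 / Lam * (inner ℝ (g (z 0) - g (z k)) v : ℝ)
        ≤ 1 / Lam * (M * p (z 0 - z k)) := mul_le_mul_of_nonneg_left hvineq hLinv.le
    have step2 : 1 / Lam * (M * p (z 0 - z k))
        ≤ 1 / Lam * (M * (2 * Real.sqrt 2 / Real.sqrt m * Real.sqrt (dw0 + eta 0))) := by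
      apply mul_le_mul_of_nonneg_left _ hLinv.le
      exact mul_le_mul_of_nonneg_left hp hM.le
    have hLne : Lam ≠ 0 := ne_of_gt hLampos
    have hsm : Real.sqrt m ≠ 0 := by positivity
    have heq : 1 / Lam * (M * (2 * Real.sqrt 2 / Real.sqrt m * Real.sqrt (dw0 + eta 0)))
        = 2 * Real.sqrt 2 * M / (Real.sqrt m * Lam) * Real.sqrt (dw0 + eta 0) := by
      simp only [div_eq_mul_inv, one_mul, mul_inv]
      ring
    rw [← heq]
    linarith
  exact_mod_cast hfinal
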